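/- arXiv:1605.04275 — 2 statements merged into one kernel-verified Lean document; each statement's English description precedes it below -/
import Mathlib

section
/- Let g be an entire function of exponential type with ∫_{-∞}^{∞} |g(t)|² |t|^α dt < ∞ for some α > -1. Then g belongs to the Cartwright class, i.e. ∫_{-∞}^{∞} log⁺|g(t)| / (1 + t²) dt < ∞. -/
open MeasureTheory Real

/-- An entire function of exponential type with `∫ |g(t)|² |t|^α dt < ∞` for some
`α > -1` belongs to the Cartwright class: `∫ log⁺|g(t)|/(1+t²) dt < ∞`. -/
theorem cartwright_of_weighted_L2
    (g : ℂ → ℂ) (hg : Differentiable ℂ g)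
    (htype : ∃ C > (0 : ℝ), ∃ σ : ℝ, ∀ z : ℂ,
      ‖g z‖ ≤ C * Real.exp (σ * ‖z‖))
    (α : ℝ) (hα : -1 < α)
    (hL2 : (∫⁻ t : ℝ, ENNReal.ofReal (‖g t‖ ^ 2 * |t| ^ α)) < ⊤) :
    (∫⁻ t : ℝ, ENNReal.ofReal
        (max (Real.log (‖g t‖)) 0 / (1 + t ^ 2))) < ⊤ := by
  obtain ⟨C, hC, σ, hσ⟩ := htype
  set M : ℝ := max (Real.log C + |σ|) 0 with hM
  have hbound : ∀ t : ℝ,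
      ENNReal.ofReal (max (Real.log (‖g t‖)) 0 / (1 + t ^ 2)) ≤
        (Set.Icc (-1:ℝ) 1).indicator (fun _ => ENNReal.ofReal M) t +
          ENNReal.ofReal (‖g t‖ ^ 2 * |t| ^ α) := by
    intro t
    have h1t : (0:ℝ) < 1 + t ^ 2 := by positivity
    have hx0 : (0:ℝ) ≤ ‖g t‖ := norm_nonneg _
    by_cases ht : |t| ≤ 1
    · have hmem : t ∈ Set.Icc (-1:ℝ) 1 := by
        rw [Set.mem_Icc, ← abs_le]; exact ht
      rw [Set.indicator_of_mem hmem]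
      refine le_trans ?_ (le_add_right le_rfl)
      apply ENNReal.ofReal_le_ofReal
      have hlog : max (Real.log (‖g t‖)) 0 ≤ M := by
        rcases eq_or_lt_of_le hx0 with h0 | h0
        · have : Real.log (‖g t‖) = 0 := by rw [← h0, Real.log_zero]
          rw [this, max_self]
          exact le_max_right _ _
        · refine max_le ?_ (le_max_right _ _)
          refine le_trans ?_ (le_max_left _ _)
          have habs : ‖(t:ℂ)‖ = |t| := by simp
          calc Real.log (‖g t‖)
              ≤ Real.log (C * Real.exp (σ * ‖(t:ℂ)‖)) :=
                Real.log_le_log h0 (hσ t)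
            _ = Real.log C + σ * ‖(t:ℂ)‖ := by
                rw [Real.log_mul (ne_of_gt hC) (Real.exp_ne_zero _), Real.log_exp]
            _ ≤ Real.log C + |σ| := by
                have h1 : σ * ‖(t:ℂ)‖ ≤ |σ| * |t| := by
                  rw [habs]
                  exact mul_le_mul_of_nonneg_right (le_abs_self σ) (abs_nonneg t)
                nlinarith [abs_nonneg σ]
      calc max (Real.log (‖g t‖)) 0 / (1 + t ^ 2)
          ≤ max (Real.log (‖g t‖)) 0 :=
            div_le_self (le_max_right _ _) (by nlinarith)
        _ ≤ M := hlog
    · push_neg at ht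
      have hmem : t ∉ Set.Icc (-1:ℝ) 1 := by
        rw [Set.mem_Icc, ← abs_le]; exact not_le.mpr ht
      rw [Set.indicator_of_notMem hmem, zero_add]
      apply ENNReal.ofReal_le_ofReal
      set x := ‖g t‖ with hxdef
      have hlx : max (Real.log x) 0 ≤ x ^ 2 := by
        refine max_le ?_ (by positivity)
        by_cases hx1 : x ≤ 1
        · exact (Real.log_nonpos hx0 hx1).trans (by positivity)
        · push_neg at hx1
          have := Real.log_le_sub_one_of_pos (by linarith : (0:ℝ) < x)
          nlinarith
      have h1 : (1:ℝ) ≤ |t| := ht.le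
      have habs : |t| ≤ 1 + t ^ 2 := by nlinarith [sq_abs t, sq_nonneg (|t| - 1)]
      have hw : 1 / (1 + t ^ 2) ≤ |t| ^ α := by
        have hrw : |t| ^ (-1:ℝ) ≤ |t| ^ α :=
          Real.rpow_le_rpow_of_exponent_le h1 (by linarith)
        have h2 : 1 / (1 + t ^ 2) ≤ |t| ^ (-1:ℝ) := by
          rw [Real.rpow_neg_one, one_div]
          exact inv_anti₀ (by linarith) habs
        exact h2.trans hrw
      calc max (Real.log x) 0 / (1 + t ^ 2)
          ≤ x ^ 2 / (1 + t ^ 2) := by gcongr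
        _ = x ^ 2 * (1 / (1 + t ^ 2)) := by ring
        _ ≤ x ^ 2 * |t| ^ α := mul_le_mul_of_nonneg_left hw (by positivity)
  calc (∫⁻ t : ℝ, ENNReal.ofReal
        (max (Real.log (‖g t‖)) 0 / (1 + t ^ 2)))
      ≤ ∫⁻ t : ℝ, ((Set.Icc (-1:ℝ) 1).indicator (fun _ => ENNReal.ofReal M) t +
          ENNReal.ofReal (‖g t‖ ^ 2 * |t| ^ α)) := lintegral_mono hbound
    _ = (∫⁻ t : ℝ, (Set.Icc (-1:ℝ) 1).indicator (fun _ => ENNReal.ofReal M) t) +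
        ∫⁻ t : ℝ, ENNReal.ofReal (‖g t‖ ^ 2 * |t| ^ α) :=
        lintegral_add_left (Measurable.indicator measurable_const measurableSet_Icc) _
    _ < ⊤ := by
        refine ENNReal.add_lt_top.mpr ⟨?_, hL2⟩
        rw [lintegral_indicator_const measurableSet_Icc]
        exact ENNReal.mul_lt_top ENNReal.ofReal_lt_top (measure_Icc_lt_top)
end

section
/- Let μ be a measure on ℝ with Christoffel-Darboux kernel K_n and Christoffel function λ_n = 1/K_n(·,·), and suppose at points t_l < t_{l+1} < ... < t_k (zeros of ψ_n(x₀,·) = p_n(x₀)p_{n-1}(·) − p_n(·)p_{n-1}(x₀) centered around x₀) the Markov-Stieltjes inequalities hold: Σ_{j=l+1}^{k-1} 1/K_n(t_j,t_j) ≤ μ([t_l, t_k]) ≤ Σ_{j=l}^{k} 1/K_n(t_j,t_j). Then dividing by appropriate normalizations and passing to the limit under the assumptions that K_n(t_{jn},t_{jn})/K_n(x₀,x₀) → f(ρ_j,ρ_j) and n^{-(α+1)} K_n(x₀,x₀) → (π ω)^{α+1} 𝕃*_α(0,0)/w(x₀) with t_{jn} = x₀ + ρ_{jn}/(πωn), ρ_{jn}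 → ρ_j, yields Σ_{j=l+1}^{k-1} 1/f(ρ_j,ρ_j) ≤ 𝕃*_α(0,0) (ρ_k^{α+1} − ρ_l^{α+1})/(α+1) ≤ Σ_{j=l}^{k} 1/f(ρ_j,ρ_j). -/
open MeasureTheory Filter Real

/-- The entire factor `G_ν` of the Bessel function, so that `J_ν(x) = x^ν G_ν(x)`. -/
noncomputable def besselG (ν x : ℝ) : ℝ :=
  ∑' k : ℕ, ((-1 : ℝ) ^ k / (Nat.factorial k * Real.Gamma (ν + k + 1))) *
    (x / 2) ^ (2 * k) * (2 : ℝ) ^ (-ν)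

/-- The value `𝕃*_α(0,0)` of the normalized kernel at the origin. -/
noncomputable def besselLStarZero (α : ℝ) : ℝ :=
  besselG ((α + 1) / 2) 0 * besselG ((α - 1) / 2) 0 / 2

noncomputable def Gaux (α s : ℝ) : ℝ := s * |s| ^ α / (α + 1)

lemma abs_rpow_succ (α : ℝ) (hα : -1 < α) (s : ℝ) : |s| ^ (α + 1) = |s| ^ α * |s| := by
  rw [Real.rpow_add' (abs_nonneg s) (by linarith), Real.rpow_one]

lemma Gaux_continuous {α : ℝ} (hα : -1 < α) : Continuous (Gaux α) := by
  rw [continuous_iff_continuousAt]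
  intro x
  rcases eq_or_ne x 0 with rfl | hx
  · have hα1 : (0:ℝ) < α + 1 := by linarith
    have h1 : Continuous fun s : ℝ => |s| ^ (α + 1) / (α + 1) :=
      (continuous_abs.rpow_const fun _ => Or.inr hα1.le).div_const _
    have h0 : Tendsto (fun s : ℝ => |s| ^ (α + 1) / (α + 1)) (nhds 0) (nhds 0) := by
      have := h1.tendsto 0
      simpa [Real.zero_rpow (ne_of_gt hα1)] using this
    have habs : ∀ s : ℝ, |Gaux α s| = |s| ^ (α + 1) / (α + 1) := by
      intro s
      rw [Gaux, abs_div, abs_mul, abs_of_pos hα1,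
        abs_of_nonneg (Real.rpow_nonneg (abs_nonneg s) α), abs_rpow_succ α hα]
      ring
    have h0n := h0.neg
    rw [neg_zero] at h0n
    have key : Tendsto (Gaux α) (nhds 0) (nhds 0) := by
      apply tendsto_of_tendsto_of_tendsto_of_le_of_le' h0n h0
      · exact Eventually.of_forall fun s => neg_le_of_abs_le (le_of_eq (habs s))
      · exact Eventually.of_forall fun s => le_of_abs_le (le_of_eq (habs s))
    have : Gaux α 0 = 0 := by simp [Gaux]
    rw [ContinuousAt, this]
    exact key
  · have h1 : ContinuousAt (fun s : ℝ => |s| ^ α) x :=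
      continuous_abs.continuousAt.rpow_const (Or.inl (abs_ne_zero.mpr hx))
    exact (continuousAt_id.mul h1).div_const _

lemma integrable_abs_rpow0 {α : ℝ} (hα : -1 < α) (c : ℝ) :
    IntervalIntegrable (fun s : ℝ => |s| ^ α) volume 0 c := by
  have base : ∀ c : ℝ, 0 ≤ c → IntervalIntegrable (fun s : ℝ => |s| ^ α) volume 0 c := by
    intro c hc
    rw [intervalIntegrable_iff, Set.uIoc_of_le hc]
    have h1 : IntegrableOn (fun s : ℝ => s ^ α) (Set.Ioc 0 c) volume := by
      have h2 := intervalIntegral.intervalIntegrable_rpow' (a := 0) (b := c) hα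
      rwa [intervalIntegrable_iff, Set.uIoc_of_le hc] at h2
    exact h1.congr_fun (fun x hx => by rw [abs_of_pos hx.1]) measurableSet_Ioc
  rcases le_or_gt 0 c with hc | hc
  · exact base c hc
  · rw [IntervalIntegrable.iff_comp_neg]
    have h3 := base (-c) (by linarith)
    have h4 : (fun x : ℝ => |(-x)| ^ α) = fun x : ℝ => |x| ^ α := by
      funext x; rw [abs_neg]
    rw [h4]
    simpa using h3

lemma integrable_abs_rpow {α : ℝ} (hα : -1 < α) (a b : ℝ) :
    IntervalIntegrable (fun s : ℝ => |s| ^ α) volume a b :=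
  (integrable_abs_rpow0 hα a).symm.trans (integrable_abs_rpow0 hα b)

lemma Gaux_integral0 {α : ℝ} (hα : -1 < α) (c : ℝ) :
    ∫ s in (0:ℝ)..c, |s| ^ α = Gaux α c := by
  have hα1 : (0:ℝ) < α + 1 := by linarith
  have main : ∀ c : ℝ, 0 ≤ c → ∫ s in (0:ℝ)..c, |s| ^ α = Gaux α c := by
    intro c hc
    have h1 : ∫ s in (0:ℝ)..c, |s| ^ α = ∫ s in (0:ℝ)..c, s ^ α := by
      apply intervalIntegral.integral_congr
      intro x hx
      rw [Set.uIcc_of_le hc] at hx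
      show |x| ^ α = x ^ α
      rw [abs_of_nonneg hx.1]
    rw [h1, integral_rpow (Or.inl hα), Gaux, abs_of_nonneg hc,
      Real.zero_rpow (ne_of_gt hα1),
      Real.rpow_add' hc (ne_of_gt hα1), Real.rpow_one]
    ring
  rcases le_or_gt 0 c with hc | hc
  · exact main c hc
  · have h2 : ∫ s in (0:ℝ)..c, |s| ^ α = ∫ s in (-c)..(0:ℝ), |s| ^ α := by
      have h3 := intervalIntegral.integral_comp_neg (a := (0:ℝ)) (b := c) (fun s : ℝ => |s| ^ α)
      simpa [abs_neg] using h3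
    rw [h2, intervalIntegral.integral_symm 0 (-c), main (-c) (by linarith)]
    simp only [Gaux, abs_neg]
    ring

lemma Gaux_integral {α : ℝ} (hα : -1 < α) (a b : ℝ) :
    ∫ s in a..b, |s| ^ α = Gaux α b - Gaux α a := by
  have h1 := intervalIntegral.integral_add_adjacent_intervals
    (integrable_abs_rpow0 hα a).symm (integrable_abs_rpow0 hα b)
  have h2 : ∫ s in a..(0:ℝ), |s| ^ α = -Gaux α a := by
    rw [intervalIntegral.integral_symm, Gaux_integral0 hα]
  rw [← h1, h2, Gaux_integral0 hα]; ring

lemma Gaux_scale {α : ℝ} (hα : -1 < α) {c : ℝ} (hc : 0 < c) (s : ℝ) :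
    Gaux α (s / c) = Gaux α s / c ^ (α + 1) := by
  have hα1 : (0:ℝ) < α + 1 := by linarith
  have hcα : (0:ℝ) < c ^ α := Real.rpow_pos_of_pos hc α
  have hc' : c ≠ 0 := ne_of_gt hc
  have hcα' : c ^ α ≠ 0 := ne_of_gt hcα
  have hα1' : α + 1 ≠ 0 := ne_of_gt hα1
  rw [Gaux, Gaux, abs_div, abs_of_pos hc, Real.div_rpow (abs_nonneg s) hc.le,
    Real.rpow_add' hc.le hα1', Real.rpow_one]
  ring

/-- Passing to the limit in the Markov–Stieltjes inequalities: if the rescaled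
zeros `ρ_{jn} → ρ_j`, the diagonal kernel ratios converge to `f(ρ_j,ρ_j) > 0` and
`K_n(x₀,x₀)/n^{α+1} → (πω)^{α+1} 𝕃*_α(0,0)/w(x₀)`, then
`Σ_{j=l+1}^{k-1} 1/f(ρ_j,ρ_j) ≤ 𝕃*_α(0,0)(ρ_k^{α+1} − ρ_l^{α+1})/(α+1)
  ≤ Σ_{j=l}^{k} 1/f(ρ_j,ρ_j)`. -/
theorem markov_stieltjes_limit
    (μ : Measure ℝ) [IsFiniteMeasure μ]
    (x₀ : ℝ) (α : ℝ) (hα : -1 < α) (w : ℝ → ℝ)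
    (hw : ContinuousAt w x₀) (hw0 : 0 < w x₀)
    (hdens : ∃ ε > (0 : ℝ), μ.restrict (Set.Ioo (x₀ - ε) (x₀ + ε))
      = (volume.withDensity fun x =>
          ENNReal.ofReal (w x * |x - x₀| ^ α)).restrict (Set.Ioo (x₀ - ε) (x₀ + ε)))
    (ω : ℝ) (hω : 0 < ω)
    (Kn : ℕ → ℝ → ℝ → ℝ) (hKpos : ∀ n x, 0 < Kn n x x)
    (t : ℕ → ℤ → ℝ) (ρn : ℕ → ℤ → ℝ) (ρ : ℤ → ℝ) (f : ℝ → ℝ → ℝ)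
    (l k : ℤ) (hlk : l < k)
    (ht : ∀ j ∈ Finset.Icc l k, ∀ n : ℕ,
      t n j = x₀ + ρn n j / (Real.pi * ω * n))
    (hρconv : ∀ j ∈ Finset.Icc l k,
      Tendsto (fun n : ℕ => ρn n j) atTop (nhds (ρ j)))
    (hρmono : ∀ i ∈ Finset.Icc l k, ∀ j ∈ Finset.Icc l k, i ≤ j → ρ i ≤ ρ j)
    (h0l : 0 ≤ ρ l) (hρlk : ρ l < ρ k)
    (hMS : ∀ n : ℕ,
      (∑ j ∈ Finset.Ioo l k, 1 / Kn n (t n j) (t n j))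
          ≤ (μ (Set.Icc (t n l) (t n k))).toReal ∧
      (μ (Set.Icc (t n l) (t n k))).toReal
          ≤ ∑ j ∈ Finset.Icc l k, 1 / Kn n (t n j) (t n j))
    (hf : ∀ j ∈ Finset.Icc l k, 0 < f (ρ j) (ρ j))
    (hKconv : ∀ j ∈ Finset.Icc l k,
      Tendsto (fun n : ℕ => Kn n (t n j) (t n j) / Kn n x₀ x₀) atTop
        (nhds (f (ρ j) (ρ j))))
    (hKx0 : Tendsto (fun n : ℕ => Kn n x₀ x₀ / (n : ℝ) ^ (α + 1)) atTop
      (nhds ((Real.pi * ω) ^ (α + 1) * besselLStarZero α / w x₀))) :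
    (∑ j ∈ Finset.Ioo l k, 1 / f (ρ j) (ρ j))
        ≤ besselLStarZero α * ((ρ k ^ (α + 1) - ρ l ^ (α + 1)) / (α + 1)) ∧
    besselLStarZero α * ((ρ k ^ (α + 1) - ρ l ^ (α + 1)) / (α + 1))
        ≤ ∑ j ∈ Finset.Icc l k, 1 / f (ρ j) (ρ j) := by
  obtain ⟨ε, hε, hrestrict⟩ := hdens
  have hα1 : (0:ℝ) < α + 1 := by linarith
  have hπω : 0 < Real.pi * ω := mul_pos Real.pi_pos hω
  have hwne : w x₀ ≠ 0 := ne_of_gt hw0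
  have hlmem : l ∈ Finset.Icc l k := Finset.mem_Icc.mpr ⟨le_refl l, hlk.le⟩
  have hkmem : k ∈ Finset.Icc l k := Finset.mem_Icc.mpr ⟨hlk.le, le_refl k⟩
  have hρk : 0 < ρ k := lt_of_le_of_lt h0l hρlk
  set D : ℝ := (ρ k ^ (α + 1) - ρ l ^ (α + 1)) / (α + 1) with hD
  set L : ℝ := besselLStarZero α with hLdef
  have hGdiff : Gaux α (ρ k) - Gaux α (ρ l) = D := by
    have e1 : ρ k ^ (α + 1) = ρ k ^ α * ρ k := by
      rw [Real.rpow_add' hρk.le (ne_of_gt hα1), Real.rpow_one]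
    have e2 : ρ l ^ (α + 1) = ρ l ^ α * ρ l := by
      rw [Real.rpow_add' h0l (ne_of_gt hα1), Real.rpow_one]
    rw [hD, e1, e2]
    simp only [Gaux, abs_of_pos hρk, abs_of_nonneg h0l]
    ring
  have hsum : ∀ S : Finset ℤ, S ⊆ Finset.Icc l k →
      Tendsto (fun n : ℕ => ∑ j ∈ S, Kn n x₀ x₀ / Kn n (t n j) (t n j)) atTop
        (nhds (∑ j ∈ S, 1 / f (ρ j) (ρ j))) := by
    intro S hS
    apply tendsto_finset_sum
    intro j hj
    have hj' := hS hj
    have h2 : Tendsto (fun n : ℕ => (Kn n (t n j) (t n j) / Kn n x₀ x₀)⁻¹) atTop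
        (nhds (f (ρ j) (ρ j))⁻¹) := (hKconv j hj').inv₀ (ne_of_gt (hf j hj'))
    have h3 : (fun n : ℕ => (Kn n (t n j) (t n j) / Kn n x₀ x₀)⁻¹)
        = fun n : ℕ => Kn n x₀ x₀ / Kn n (t n j) (t n j) := by
      funext n; rw [inv_div]
    rw [h3, ← one_div] at h2
    exact h2
  have hcnpos : ∀ n : ℕ, 1 ≤ n → (0:ℝ) < Real.pi * ω * n := by
    intro n hn
    have h1 : (0:ℝ) < (n:ℝ) := by exact_mod_cast Nat.pos_of_ne_zero (by omega)
    exact mul_pos hπω h1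
  have hinv : Tendsto (fun n : ℕ => (Real.pi * ω * (n:ℝ))⁻¹) atTop (nhds 0) := by
    apply Tendsto.inv_tendsto_atTop
    exact Tendsto.const_mul_atTop hπω tendsto_natCast_atTop_atTop
  have hdzero : ∀ j ∈ Finset.Icc l k,
      Tendsto (fun n : ℕ => ρn n j / (Real.pi * ω * n)) atTop (nhds 0) := by
    intro j hj
    have h1 := (hρconv j hj).mul hinv
    rw [mul_zero] at h1
    exact h1.congr fun n => (div_eq_mul_inv _ _).symm
  have hψnn : ∀ x : ℝ, 0 ≤ |x - x₀| ^ α := fun x => Real.rpow_nonneg (abs_nonneg _) _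
  have key : ∀ δ : ℝ, 0 < δ → δ < w x₀ →
      (∑ j ∈ Finset.Ioo l k, 1 / f (ρ j) (ρ j)) ≤ L * D * ((w x₀ + δ) / w x₀) ∧
      L * D * ((w x₀ - δ) / w x₀) ≤ ∑ j ∈ Finset.Icc l k, 1 / f (ρ j) (ρ j) := by
    intro δ hδ hδw
    obtain ⟨ε', hε', hweps⟩ := Metric.continuousAt_iff.mp hw δ hδ
    have hε₀ : 0 < min ε ε' := lt_min hε hε'
    have hC : (0:ℝ) < w x₀ + δ := by linarith
    have hC' : (0:ℝ) < w x₀ - δ := by linarith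
    have ev1 : ∀ᶠ n : ℕ in atTop, 1 ≤ n := eventually_ge_atTop 1
    have ev2 : ∀ᶠ n : ℕ in atTop, ρn n l < ρn n k := by
      have h1 := (hρconv k hkmem).sub (hρconv l hlmem)
      have h2 := h1.eventually (eventually_gt_nhds (sub_pos.mpr hρlk))
      filter_upwards [h2] with n hn
      linarith [hn]
    have ev3 : ∀ᶠ n : ℕ in atTop, |ρn n l / (Real.pi * ω * n)| < min ε ε' := by
      have h1 := Metric.tendsto_nhds.mp (hdzero l hlmem) _ hε₀
      filter_upwards [h1] with n hn
      rw [Real.dist_eq, sub_zero] at hn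
      exact hn
    have ev4 : ∀ᶠ n : ℕ in atTop, |ρn n k / (Real.pi * ω * n)| < min ε ε' := by
      have h1 := Metric.tendsto_nhds.mp (hdzero k hkmem) _ hε₀
      filter_upwards [h1] with n hn
      rw [Real.dist_eq, sub_zero] at hn
      exact hn
    have main : ∀ᶠ n : ℕ in atTop,
        (∑ j ∈ Finset.Ioo l k, Kn n x₀ x₀ / Kn n (t n j) (t n j))
            ≤ (Kn n x₀ x₀ / (n:ℝ) ^ (α + 1)) *
              ((w x₀ + δ) * (Gaux α (ρn n k) - Gaux α (ρn n l)) / (Real.pi * ω) ^ (α + 1)) ∧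
        (Kn n x₀ x₀ / (n:ℝ) ^ (α + 1)) *
              ((w x₀ - δ) * (Gaux α (ρn n k) - Gaux α (ρn n l)) / (Real.pi * ω) ^ (α + 1))
            ≤ ∑ j ∈ Finset.Icc l k, Kn n x₀ x₀ / Kn n (t n j) (t n j) := by
      filter_upwards [ev1, ev2, ev3, ev4] with n hn1 hn2 hn3 hn4
      have hc : (0:ℝ) < Real.pi * ω * n := hcnpos n hn1
      have hu := ht l hlmem n
      have hv := ht k hkmem n
      have hab : t n l ≤ t n k := by
        rw [hu, hv]
        have h1 : ρn n l / (Real.pi * ω * n) ≤ ρn n k / (Real.pi * ω * n) :=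
          (div_le_div_iff_of_pos_right hc).mpr hn2.le
        linarith
      have hsub : Set.Icc (t n l) (t n k) ⊆ Set.Ioo (x₀ - min ε ε') (x₀ + min ε ε') := by
        intro x hx
        have h1 : -(min ε ε') < ρn n l / (Real.pi * ω * n) := neg_lt_of_abs_lt hn3
        have h2 : ρn n k / (Real.pi * ω * n) < min ε ε' := lt_of_abs_lt hn4
        have h3 := hx.1
        have h4 := hx.2
        rw [hu] at h3
        rw [hv] at h4
        rw [Set.mem_Ioo]
        constructor <;> linarith
      have hsubε : Set.Icc (t n l) (t n k) ⊆ Set.Ioo (x₀ - ε) (x₀ + ε) :=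
        fun x hx => Set.Ioo_subset_Ioo (by linarith [min_le_left ε ε'])
          (by linarith [min_le_left ε ε']) (hsub hx)
      have hwbound : ∀ x ∈ Set.Icc (t n l) (t n k),
          w x₀ - δ ≤ w x ∧ w x ≤ w x₀ + δ := by
        intro x hx
        have h1 := hsub hx
        have h2 : dist x x₀ < ε' := by
          rw [Real.dist_eq, abs_lt]
          have h5 := min_le_right ε ε'
          have h6 := h1.1
          have h7 := h1.2
          constructor <;> linarith
        have h3 := hweps h2
        rw [Real.dist_eq, abs_lt] at h3
        constructor <;> linarith [h3.1, h3.2]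
      have hμeq : μ (Set.Icc (t n l) (t n k))
          = ∫⁻ x in Set.Icc (t n l) (t n k), ENNReal.ofReal (w x * |x - x₀| ^ α) ∂volume := by
        have e1 : μ (Set.Icc (t n l) (t n k))
            = μ.restrict (Set.Ioo (x₀ - ε) (x₀ + ε)) (Set.Icc (t n l) (t n k)) := by
          rw [Measure.restrict_apply measurableSet_Icc,
            Set.inter_eq_self_of_subset_left hsubε]
        rw [e1, hrestrict, Measure.restrict_apply measurableSet_Icc,
          Set.inter_eq_self_of_subset_left hsubε, withDensity_apply _ measurableSet_Icc]
      have hint : IntegrableOn (fun x : ℝ => |x - x₀| ^ α) (Set.Icc (t n l) (t n k)) volume := by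
        have h2 : IntervalIntegrable (fun x : ℝ => |x - x₀| ^ α) volume (t n l) (t n k) := by
          have h3 := (integrable_abs_rpow hα (t n l - x₀) (t n k - x₀)).comp_sub_right x₀
          simpa using h3
        exact (intervalIntegrable_iff_integrableOn_Icc_of_le hab).mp h2
      have hintval : ∫ x in Set.Icc (t n l) (t n k), |x - x₀| ^ α ∂volume
          = (Gaux α (ρn n k) - Gaux α (ρn n l)) / (Real.pi * ω * n) ^ (α + 1) := by
        rw [MeasureTheory.integral_Icc_eq_integral_Ioc,
          ← intervalIntegral.integral_of_le hab,
          show (∫ x in (t n l)..(t n k), |x - x₀| ^ α)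
              = ∫ x in (t n l - x₀)..(t n k - x₀), |x| ^ α from
            intervalIntegral.integral_comp_sub_right (fun s => |s| ^ α) x₀,
          Gaux_integral hα]
        have ha' : t n l - x₀ = ρn n l / (Real.pi * ω * n) := by rw [hu]; ring
        have hb' : t n k - x₀ = ρn n k / (Real.pi * ω * n) := by rw [hv]; ring
        rw [ha', hb', Gaux_scale hα hc, Gaux_scale hα hc, ← sub_div]
      have hbound : ∀ c : ℝ,
          ∫ x in Set.Icc (t n l) (t n k), c * |x - x₀| ^ α ∂volume
            = c * ((Gaux α (ρn n k) - Gaux α (ρn n l)) / (Real.pi * ω * n) ^ (α + 1)) := by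
        intro c
        rw [MeasureTheory.integral_const_mul, hintval]
      have hupper : (μ (Set.Icc (t n l) (t n k))).toReal
          ≤ (w x₀ + δ) * ((Gaux α (ρn n k) - Gaux α (ρn n l)) / (Real.pi * ω * n) ^ (α + 1)) := by
        have h5 : μ (Set.Icc (t n l) (t n k))
            ≤ ∫⁻ x in Set.Icc (t n l) (t n k),
                ENNReal.ofReal ((w x₀ + δ) * |x - x₀| ^ α) ∂volume := by
          rw [hμeq]
          refine lintegral_mono_ae ((ae_restrict_iff' measurableSet_Icc).mpr
            (ae_of_all _ fun x hx => ?_))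
          exact ENNReal.ofReal_le_ofReal
            (mul_le_mul_of_nonneg_right (hwbound x hx).2 (hψnn x))
        have h6 : ∫⁻ x in Set.Icc (t n l) (t n k),
              ENNReal.ofReal ((w x₀ + δ) * |x - x₀| ^ α) ∂volume
            = ENNReal.ofReal
                (∫ x in Set.Icc (t n l) (t n k), (w x₀ + δ) * |x - x₀| ^ α ∂volume) :=
          (ofReal_integral_eq_lintegral_ofReal (hint.const_mul _)
            (ae_of_all _ fun x => mul_nonneg hC.le (hψnn x))).symm
        calc (μ (Set.Icc (t n l) (t n k))).toReal
            ≤ (ENNReal.ofReal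
                (∫ x in Set.Icc (t n l) (t n k), (w x₀ + δ) * |x - x₀| ^ α ∂volume)).toReal :=
              ENNReal.toReal_mono ENNReal.ofReal_ne_top (h6 ▸ h5)
          _ = ∫ x in Set.Icc (t n l) (t n k), (w x₀ + δ) * |x - x₀| ^ α ∂volume :=
              ENNReal.toReal_ofReal (integral_nonneg fun x => mul_nonneg hC.le (hψnn x))
          _ = _ := hbound _
      have hlower : (w x₀ - δ) * ((Gaux α (ρn n k) - Gaux α (ρn n l)) / (Real.pi * ω * n) ^ (α + 1))
          ≤ (μ (Set.Icc (t n l) (t n k))).toReal := by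
        have h5 : ∫⁻ x in Set.Icc (t n l) (t n k),
              ENNReal.ofReal ((w x₀ - δ) * |x - x₀| ^ α) ∂volume
            ≤ μ (Set.Icc (t n l) (t n k)) := by
          rw [hμeq]
          refine lintegral_mono_ae ((ae_restrict_iff' measurableSet_Icc).mpr
            (ae_of_all _ fun x hx => ?_))
          exact ENNReal.ofReal_le_ofReal
            (mul_le_mul_of_nonneg_right (hwbound x hx).1 (hψnn x))
        have h6 : ∫⁻ x in Set.Icc (t n l) (t n k),
              ENNReal.ofReal ((w x₀ - δ) * |x - x₀| ^ α) ∂volume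
            = ENNReal.ofReal
                (∫ x in Set.Icc (t n l) (t n k), (w x₀ - δ) * |x - x₀| ^ α ∂volume) :=
          (ofReal_integral_eq_lintegral_ofReal (hint.const_mul _)
            (ae_of_all _ fun x => mul_nonneg hC'.le (hψnn x))).symm
        calc (w x₀ - δ) * ((Gaux α (ρn n k) - Gaux α (ρn n l)) / (Real.pi * ω * n) ^ (α + 1))
            = ∫ x in Set.Icc (t n l) (t n k), (w x₀ - δ) * |x - x₀| ^ α ∂volume :=
              (hbound _).symm
          _ = (ENNReal.ofReal
                (∫ x in Set.Icc (t n l) (t n k), (w x₀ - δ) * |x - x₀| ^ α ∂volume)).toReal :=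
              (ENNReal.toReal_ofReal (integral_nonneg fun x => mul_nonneg hC'.le (hψnn x))).symm
          _ ≤ (μ (Set.Icc (t n l) (t n k))).toReal :=
              ENNReal.toReal_mono (measure_ne_top μ _) (h6 ▸ h5)
      have hnpos : (0:ℝ) < (n:ℝ) := by exact_mod_cast Nat.pos_of_ne_zero (by omega)
      have hresc : ∀ c : ℝ,
          Kn n x₀ x₀ * (c * ((Gaux α (ρn n k) - Gaux α (ρn n l)) / (Real.pi * ω * n) ^ (α + 1)))
          = (Kn n x₀ x₀ / (n:ℝ) ^ (α + 1)) *
            (c * (Gaux α (ρn n k) - Gaux α (ρn n l)) / (Real.pi * ω) ^ (α + 1)) := by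
        intro c
        have h7 : (Real.pi * ω * n) ^ (α + 1)
            = (Real.pi * ω) ^ (α + 1) * (n:ℝ) ^ (α + 1) :=
          Real.mul_rpow hπω.le (Nat.cast_nonneg n)
        have h8 : ((n:ℝ)) ^ (α + 1) ≠ 0 := ne_of_gt (Real.rpow_pos_of_pos hnpos _)
        have h9 : (Real.pi * ω) ^ (α + 1) ≠ 0 := ne_of_gt (Real.rpow_pos_of_pos hπω _)
        rw [h7]
        ring
      have hAn : 0 < Kn n x₀ x₀ := hKpos n x₀
      have hsum_eq : ∀ S : Finset ℤ,
          (∑ j ∈ S, Kn n x₀ x₀ / Kn n (t n j) (t n j))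
          = Kn n x₀ x₀ * ∑ j ∈ S, 1 / Kn n (t n j) (t n j) := by
        intro S
        rw [Finset.mul_sum]
        exact Finset.sum_congr rfl fun j _ => by rw [mul_one_div]
      constructor
      · calc ∑ j ∈ Finset.Ioo l k, Kn n x₀ x₀ / Kn n (t n j) (t n j)
            = Kn n x₀ x₀ * ∑ j ∈ Finset.Ioo l k, 1 / Kn n (t n j) (t n j) := hsum_eq _
          _ ≤ Kn n x₀ x₀ * (μ (Set.Icc (t n l) (t n k))).toReal :=
              mul_le_mul_of_nonneg_left (hMS n).1 hAn.le
          _ ≤ Kn n x₀ x₀ * ((w x₀ + δ) *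
              ((Gaux α (ρn n k) - Gaux α (ρn n l)) / (Real.pi * ω * n) ^ (α + 1))) :=
              mul_le_mul_of_nonneg_left hupper hAn.le
          _ = _ := hresc _
      · calc (Kn n x₀ x₀ / (n:ℝ) ^ (α + 1)) *
              ((w x₀ - δ) * (Gaux α (ρn n k) - Gaux α (ρn n l)) / (Real.pi * ω) ^ (α + 1))
            = Kn n x₀ x₀ * ((w x₀ - δ) *
              ((Gaux α (ρn n k) - Gaux α (ρn n l)) / (Real.pi * ω * n) ^ (α + 1))) :=
              (hresc _).symm
          _ ≤ Kn n x₀ x₀ * (μ (Set.Icc (t n l) (t n k))).toReal :=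
              mul_le_mul_of_nonneg_left hlower hAn.le
          _ ≤ Kn n x₀ x₀ * ∑ j ∈ Finset.Icc l k, 1 / Kn n (t n j) (t n j) :=
              mul_le_mul_of_nonneg_left (hMS n).2 hAn.le
          _ = _ := (hsum_eq _).symm
    have hGl : Tendsto (fun n : ℕ => Gaux α (ρn n l)) atTop (nhds (Gaux α (ρ l))) :=
      ((Gaux_continuous hα).tendsto _).comp (hρconv l hlmem)
    have hGk : Tendsto (fun n : ℕ => Gaux α (ρn n k)) atTop (nhds (Gaux α (ρ k))) :=
      ((Gaux_continuous hα).tendsto _).comp (hρconv k hkmem)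
    have hval : ∀ c : ℝ, ((Real.pi * ω) ^ (α + 1) * L / w x₀) *
        (c * (Gaux α (ρ k) - Gaux α (ρ l)) / (Real.pi * ω) ^ (α + 1))
        = L * D * (c / w x₀) := by
      intro c
      have hne : (Real.pi * ω) ^ (α + 1) ≠ 0 := ne_of_gt (Real.rpow_pos_of_pos hπω _)
      calc ((Real.pi * ω) ^ (α + 1) * L / w x₀) *
          (c * (Gaux α (ρ k) - Gaux α (ρ l)) / (Real.pi * ω) ^ (α + 1))
          = (Gaux α (ρ k) - Gaux α (ρ l)) * (L * (c / w x₀)) *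
            ((Real.pi * ω) ^ (α + 1) / (Real.pi * ω) ^ (α + 1)) := by ring
        _ = L * D * (c / w x₀) := by rw [div_self hne, hGdiff]; ring
    have hRU : Tendsto (fun n : ℕ => (Kn n x₀ x₀ / (n:ℝ) ^ (α + 1)) *
        ((w x₀ + δ) * (Gaux α (ρn n k) - Gaux α (ρn n l)) / (Real.pi * ω) ^ (α + 1))) atTop
        (nhds (((Real.pi * ω) ^ (α + 1) * L / w x₀) *
          ((w x₀ + δ) * (Gaux α (ρ k) - Gaux α (ρ l)) / (Real.pi * ω) ^ (α + 1)))) :=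
      hKx0.mul (((hGk.sub hGl).const_mul _).div_const _)
    have hRL : Tendsto (fun n : ℕ => (Kn n x₀ x₀ / (n:ℝ) ^ (α + 1)) *
        ((w x₀ - δ) * (Gaux α (ρn n k) - Gaux α (ρn n l)) / (Real.pi * ω) ^ (α + 1))) atTop
        (nhds (((Real.pi * ω) ^ (α + 1) * L / w x₀) *
          ((w x₀ - δ) * (Gaux α (ρ k) - Gaux α (ρ l)) / (Real.pi * ω) ^ (α + 1)))) :=
      hKx0.mul (((hGk.sub hGl).const_mul _).div_const _)
    constructor
    · have h1 := le_of_tendsto_of_tendsto (hsum _ Finset.Ioo_subset_Icc_self) hRU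
        (main.mono fun n h => h.1)
      rwa [hval _] at h1
    · have h1 := le_of_tendsto_of_tendsto hRL (hsum _ (subset_refl _))
        (main.mono fun n h => h.2)
      rwa [hval _] at h1
  have h0m : Tendsto (fun m : ℕ => w x₀ / ((m:ℝ) + 2)) atTop (nhds 0) := by
    apply Tendsto.div_atTop tendsto_const_nhds
    exact tendsto_atTop_add_const_right _ _ tendsto_natCast_atTop_atTop
  have hδm : ∀ m : ℕ, 0 < w x₀ / ((m:ℝ) + 2) := by
    intro m
    apply div_pos hw0
    positivity
  have hδm' : ∀ m : ℕ, w x₀ / ((m:ℝ) + 2) < w x₀ := by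
    intro m
    rw [div_lt_iff₀ (by positivity)]
    nlinarith [hw0, Nat.cast_nonneg (α := ℝ) m]
  constructor
  · have hBnd : ∀ m : ℕ, (∑ j ∈ Finset.Ioo l k, 1 / f (ρ j) (ρ j))
        ≤ L * D * ((w x₀ + w x₀ / ((m:ℝ) + 2)) / w x₀) :=
      fun m => (key _ (hδm m) (hδm' m)).1
    have hB : Tendsto (fun m : ℕ => L * D * ((w x₀ + w x₀ / ((m:ℝ) + 2)) / w x₀)) atTop
        (nhds (L * D)) := by
      have h1 := ((h0m.const_add (w x₀)).div_const (w x₀)).const_mul (L * D)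
      simpa [add_zero, div_self hwne, mul_one] using h1
    exact ge_of_tendsto' hB hBnd
  · have hBnd : ∀ m : ℕ, L * D * ((w x₀ - w x₀ / ((m:ℝ) + 2)) / w x₀)
        ≤ ∑ j ∈ Finset.Icc l k, 1 / f (ρ j) (ρ j) :=
      fun m => (key _ (hδm m) (hδm' m)).2
    have hB : Tendsto (fun m : ℕ => L * D * ((w x₀ - w x₀ / ((m:ℝ) + 2)) / w x₀)) atTop
        (nhds (L * D)) := by
      have h1 := (((h0m.const_sub (w x₀)).div_const (w x₀)).const_mul (L * D))
      simpa [sub_zero, div_self hwne, mul_one] using h1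
    exact le_of_tendsto' hB hBnd
end
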